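/- arXiv:2307.16552 — 2 statements merged into one kernel-verified Lean document; each statement's English description precedes it below -/
import Mathlib

section
/- Let F be an endofunctor on Set and let (L_i)_{i ∈ I} be any family of lax F-liftings. Then the assignment L defined by L R := ⋂_{i ∈ I} L_i R (pointwise intersection of relations) is again a lax F-lifting, and it is the greatest lower bound of the family in the pointwise inclusion order. Consequently, the collection Lift(F) of all lax F-liftings, ordered pointwise by inclusion, is a complete lattice. -/
universe u v

open CategoryTheory

/-- Relational composition, as `Rel.comp` was defined in the older Mathlib. -/
def Rel.comp {α β γ : Type*} (r : Rel α β) (s : Rel β γ) : Rel α γ :=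
  fun x z => ∃ y, r x y ∧ s y z

/-- Converse relation, as `Rel.inv` was defined in the older Mathlib. -/
def Rel.inv {α β : Type*} (r : Rel α β) : Rel β α := flip r

/-- The graph of a function, as a relation. -/
def gr {X Y : Type u} (f : X → Y) : Rel X Y := fun x y => f x = y

/-- A lax lifting of an endofunctor `F` on `Set` to relations: monotone, laxly
functorial, and laxly extending graphs and converse graphs. -/
structure LaxLifting (F : Type u ⥤ Type u) : Type (u + 1) where
  map : ∀ {X Y : Type u}, Rel X Y → Rel (F.obj X) (F.obj Y)
  mono : ∀ {X Y : Type u} {R S : Rel X Y}, R ≤ S → map R ≤ map S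
  laxComp : ∀ {X Y Z : Type u} (R : Rel X Y) (S : Rel Y Z),
    (map R).comp (map S) ≤ map (R.comp S)
  graph_le : ∀ {X Y : Type u} (f : X → Y), gr (F.map (TypeCat.ofHom f)) ≤ map (gr f)
  graphInv_le : ∀ {X Y : Type u} (f : X → Y), (gr (F.map (TypeCat.ofHom f))).inv ≤ map (gr f).inv

/-- Pointwise order on lax liftings. -/
def LiftLE {F : Type u ⥤ Type u} (L L' : LaxLifting F) : Prop :=
  ∀ (X Y : Type u) (R : Rel X Y), L.map R ≤ L'.map R

/-- Extensionality for lax liftings. -/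
theorem LaxLifting.ext' {F : Type u ⥤ Type u} {L L' : LaxLifting F}
    (h : ∀ (X Y : Type u) (R : Rel X Y), L.map R = L'.map R) : L = L' := by
  cases L with
  | mk m mo lc g gi =>
    cases L' with
    | mk m' mo' lc' g' gi' =>
      have : @m = @m' := by
        funext X Y R
        exact h X Y R
      subst this
      rfl

/-- The pointwise intersection of a family of lax liftings. -/
def infLift {F : Type u ⥤ Type u} {ι : Type v} (Li : ι → LaxLifting F) :
    LaxLifting F where
  map R a b := ∀ i, (Li i).map R a b
  mono h := fun a b hab i => (Li i).mono h a b (hab i)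
  laxComp R S := fun a c hac i => by
    obtain ⟨b, hab, hbc⟩ := hac
    exact (Li i).laxComp R S a c ⟨b, hab i, hbc i⟩
  graph_le f := fun a b hab i => (Li i).graph_le f a b hab
  graphInv_le f := fun a b hab i => (Li i).graphInv_le f a b hab

/-- The pointwise intersection of a set of lax liftings. -/
def sInfLift {F : Type u ⥤ Type u} (s : Set (LaxLifting F)) : LaxLifting F :=
  infLift (fun L : s => (L : LaxLifting F))

/-- Pointwise intersections of lax liftings are lax liftings and are greatest lower
bounds; consequently the lax liftings of `F` form a complete lattice under the
pointwise inclusion order. -/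
theorem liftings_complete_lattice (F : Type u ⥤ Type u) :
    (∀ (ι : Type v) (Li : ι → LaxLifting F),
      ∃ L : LaxLifting F,
        (∀ (X Y : Type u) (R : Rel X Y) (a : F.obj X) (b : F.obj Y),
          L.map R a b ↔ ∀ i : ι, (Li i).map R a b) ∧
        (∀ i : ι, LiftLE L (Li i)) ∧
        (∀ L' : LaxLifting F, (∀ i : ι, LiftLE L' (Li i)) → LiftLE L' L)) ∧
    (∃ inst : CompleteLattice (LaxLifting F),
      ∀ L L' : LaxLifting F, inst.le L L' ↔ LiftLE L L') := by
  constructor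
  · intro ι Li
    refine ⟨infLift Li, fun X Y R a b => Iff.rfl,
      fun i X Y R a b h => h i,
      fun L' hL' X Y R a b h i => hL' i X Y R a b h⟩
  · letI po : PartialOrder (LaxLifting F) :=
      { le := LiftLE
        le_refl := fun L X Y R a b h => h
        le_trans := fun L₁ L₂ L₃ h12 h23 X Y R a b h => h23 X Y R a b (h12 X Y R a b h)
        le_antisymm := fun L L' h h' => LaxLifting.ext' fun X Y R => by
          funext a b
          exact propext ⟨fun hh => h X Y R a b hh, fun hh => h' X Y R a b hh⟩ }
    letI : InfSet (LaxLifting F) := ⟨sInfLift⟩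
    letI inst : CompleteLattice (LaxLifting F) :=
      completeLatticeOfInf (LaxLifting F) (by
        intro s
        constructor
        · intro L hL X Y R a b h
          exact h ⟨L, hL⟩
        · intro L' hL' X Y R a b h ⟨L, hL⟩
          exact hL' hL X Y R a b h)
    exact ⟨inst, fun L L' => Iff.rfl⟩
end

section
/- Every endofunctor F on Set admits a minimal lax F-lifting: there exists a lax F-lifting L₀ such that for every lax F-lifting L and every relation R : X ⇸ Y, L₀ R ⊆ L R. -/
universe u v

open CategoryTheory

/-- Every endofunctor on Set admits a minimal lax lifting. -/
theorem exists_minimal_lifting (F : Type u ⥤ Type u) :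
    ∃ L₀ : LaxLifting F, ∀ (L : LaxLifting F) (X Y : Type u) (R : Rel X Y),
      L₀.map R ≤ L.map R := by
  refine ⟨⟨fun R a b => ∀ L : LaxLifting F, L.map R a b, ?_, ?_, ?_, ?_⟩,
    fun L X Y R a b h => h L⟩
  · exact fun h a b hab L => L.mono h a b (hab L)
  · intro X Y Z R S a c h L
    obtain ⟨b, h1, h2⟩ := h
    exact L.laxComp R S a c ⟨b, h1 L, h2 L⟩
  · exact fun f a b h L => L.graph_le f a b h
  · exact fun f a b h L => L.graphInv_le f a b h
end
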